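/- Let 𝒦 be a separable complex Hilbert space, G a bounded operator on 𝒦, and (L_i)_{i∈I} a finite or countable family of bounded operators on 𝒦 such that Σ_{i∈I} L_i*L_i converges strongly. For any φ ∈ 𝒦 \ {0}, the set ℂ[ℒ]φ is dense in 𝒦 if and only if the set ℂ[G,L]φ is dense in 𝒦, where ℂ[ℒ] denotes the set of polynomials in the operators e^{tG} (t > 0) and L_i (i ∈ I), and ℂ[G,L] denotes the set of polynomials in G and the L_i (i ∈ I). -/

import Mathlib

open scoped ENNReal ComplexInnerProductSpace ComplexOrder
open MeasureTheory ContinuousLinearMap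

noncomputable section

section Core

variable {E : Type*} [NormedAddCommGroup E] [InnerProductSpace ℂ E] [CompleteSpace E]

/-- Trace of a (positive) operator, as a value in `[0,∞]`: supremum over finite
orthonormal families of the sums of diagonal matrix elements. -/
def trENN (A : E →L[ℂ] E) : ℝ≥0∞ :=
  ⨆ (n : ℕ) (e : Fin n → E) (_ : Orthonormal ℂ e),
    ∑ k, ENNReal.ofReal (⟪e k, A (e k)⟫.re)

/-- Trace norm of an operator, as a value in `[0,∞]`: supremum over pairs of finite
orthonormal families of `∑ k |⟪f k, A (e k)⟫|`. -/
def traceNormENN (A : E →L[ℂ] E) : ℝ≥0∞ :=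
  ⨆ (n : ℕ) (e : Fin n → E) (f : Fin n → E) (_ : Orthonormal ℂ e) (_ : Orthonormal ℂ f),
    ∑ k, (‖⟪f k, A (e k)⟫‖₊ : ℝ≥0∞)

/-- A bounded operator is trace class when its trace norm is finite. -/
def IsTraceClass (A : E →L[ℂ] E) : Prop := traceNormENN A < ⊤

/-- `A > 0`: positive definiteness of an operator, `⟪φ, A φ⟫ > 0` for every `φ ≠ 0`. -/
def PosDefOp (A : E →L[ℂ] E) : Prop := ∀ φ : E, φ ≠ 0 → 0 < ⟪φ, A φ⟫

/-- A density matrix: a positive (trace-class) operator with trace one. -/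
def IsDensity (ρ : E →L[ℂ] E) : Prop := ρ.IsPositive ∧ trENN ρ = 1

/-- The trace of an operator computed along a Hilbert basis. -/
def traceAlong {ι : Type} (b : HilbertBasis ι ℂ E) (A : E →L[ℂ] E) : ℂ :=
  ∑' k, ⟪b k, A (b k)⟫

/-- `T` is the semigroup `e^{tL}`: for each `t ≥ 0` and each trace-class `A`, the exponential
series `∑_k (t^k/k!) L^k(A)` converges to `T t A`. -/
def IsExpSemigroup (T : ℝ → (E →L[ℂ] E) → (E →L[ℂ] E))
    (L : (E →L[ℂ] E) → (E →L[ℂ] E)) : Prop :=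
  ∀ t : ℝ, 0 ≤ t → ∀ A : E →L[ℂ] E, IsTraceClass A →
    Filter.Tendsto
      (fun N : ℕ => ∑ k ∈ Finset.range N, (t ^ k / (Nat.factorial k) : ℝ) • L^[k] A)
      Filter.atTop (nhds (T t A))

/-- A semigroup acting on trace-class operators is positivity improving if it maps
every nonzero positive trace-class operator to a positive-definite one at some time `t > 0`. -/
def PositivityImproving (T : ℝ → (E →L[ℂ] E) → (E →L[ℂ] E)) : Prop :=
  ∀ A : E →L[ℂ] E, IsTraceClass A → A.IsPositive → A ≠ 0 →
    ∃ t : ℝ, 0 < t ∧ PosDefOp (T t A)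

/-- `T t` admits no nontrivial subharmonic projection, i.e. no orthogonal projection
`P ∉ {0, 1}` with `T t (P 𝓘₁ P) ⊆ P 𝓘₁ P`. -/
def NoNontrivialSubharmonicProjection (T : ℝ → (E →L[ℂ] E) → (E →L[ℂ] E)) (t : ℝ) : Prop :=
  ¬ ∃ P : E →L[ℂ] E, IsSelfAdjoint P ∧ P ∘L P = P ∧ P ≠ 0 ∧ P ≠ 1 ∧
      ∀ A : E →L[ℂ] E, IsTraceClass A → P ∘L T t (P ∘L A ∘L P) ∘L P = T t (P ∘L A ∘L P)

/-- The simplex `{0 < t_1 < ⋯ < t_n < t}`. -/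
def simplexT (n : ℕ) (t : ℝ) : Set (Fin n → ℝ) :=
  {s | StrictMono s ∧ ∀ k, 0 < s k ∧ s k < t}

/-- The unbounded simplex `{0 < t_1 < ⋯ < t_n < ∞}`. -/
def simplexInf (n : ℕ) : Set (Fin n → ℝ) :=
  {s | StrictMono s ∧ ∀ k, 0 < s k}

end Core

section QMS

variable {K : Type*} [NormedAddCommGroup K] [InnerProductSpace ℂ K] [CompleteSpace K]
variable {I : Type} [Countable I]

/-- Strong convergence of `∑ᵢ (L i)* (L i)` to the operator `S`. -/
def StrongSum (L : I → K →L[ℂ] K) (S : K →L[ℂ] K) : Prop :=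
  ∀ φ : K, HasSum (fun i => adjoint (L i) (L i φ)) (S φ)

/-- The operator `G = -iH - (1/2) ∑ᵢ (L i)* (L i)`. -/
def Gop (H S : K →L[ℂ] K) : K →L[ℂ] K := (-Complex.I) • H - (2⁻¹ : ℂ) • S

/-- The Lindblad generator `𝓛(μ) = G μ + μ G* + ∑ᵢ Lᵢ μ Lᵢ*`. -/
def Lind (G : K →L[ℂ] K) (L : I → K →L[ℂ] K) (μ : K →L[ℂ] K) : K →L[ℂ] K :=
  G ∘L μ + μ ∘L adjoint G + ∑' i, L i ∘L μ ∘L adjoint (L i)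

/-- `ζ_t(ξ) = e^{(t-t_n)G} L_{i_n} e^{(t_n - t_{n-1})G} ⋯ L_{i_1} e^{t_1 G}` for
`ξ = (i_1, …, i_n; t_1, …, t_n)`. -/
def zeta (G : K →L[ℂ] K) (L : I → K →L[ℂ] K) :
    (n : ℕ) → (Fin n → I) → (Fin n → ℝ) → ℝ → (K →L[ℂ] K)
  | 0, _, _, t => NormedSpace.exp (t • G)
  | n + 1, idx, s, t =>
      NormedSpace.exp ((t - s (Fin.last n)) • G) ∘L L (idx (Fin.last n)) ∘L
        zeta G L n (idx ∘ Fin.castSucc) (s ∘ Fin.castSucc) (s (Fin.last n))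

/-- The generating set `{e^{tG} : t > 0} ∪ {L i}` of the algebra `ℂ[𝓛]`. -/
def expGenSet (G : K →L[ℂ] K) (L : I → K →L[ℂ] K) : Set (K →L[ℂ] K) :=
  {B | ∃ t : ℝ, 0 < t ∧ B = NormedSpace.exp (t • G)} ∪ Set.range L

/-- The generating set `{G} ∪ {L i}` of the algebra `ℂ[G, L]`. -/
def genSet (G : K →L[ℂ] K) (L : I → K →L[ℂ] K) : Set (K →L[ℂ] K) :=
  {G} ∪ Set.range L

/-- The orbit of the vector `φ` under the algebra of (noncommutative) polynomials in the
operators of `S` is dense. -/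
def DenseOrbit (S : Set (K →L[ℂ] K)) (φ : K) : Prop :=
  Dense {ψ : K | ∃ B ∈ Algebra.adjoin ℂ S, ψ = B φ}

end QMS

section OrbitAux

variable {K : Type*} [NormedAddCommGroup K] [InnerProductSpace ℂ K] [CompleteSpace K]

/-- The orbit of `φ` under polynomials in `S`. -/
def orbitSet (S : Set (K →L[ℂ] K)) (φ : K) : Set K :=
  {ψ : K | ∃ B ∈ Algebra.adjoin ℂ S, ψ = B φ}

/-- The orbit as a submodule. -/
def orbitSub (S : Set (K →L[ℂ] K)) (φ : K) : Submodule ℂ K where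
  carrier := orbitSet S φ
  zero_mem' := ⟨0, zero_mem _, by simp⟩
  add_mem' := by
    rintro a b ⟨A, hA, rfl⟩ ⟨B, hB, rfl⟩
    exact ⟨A + B, add_mem hA hB, by simp⟩
  smul_mem' := by
    rintro c a ⟨A, hA, rfl⟩
    exact ⟨c • A, Subalgebra.smul_mem _ hA c, by simp⟩

/-- The closed orbit submodule. -/
def orbitCl (S : Set (K →L[ℂ] K)) (φ : K) : Submodule ℂ K :=
  (orbitSub S φ).topologicalClosure

lemma mem_orbitCl_iff {S : Set (K →L[ℂ] K)} {φ ψ : K} :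
    ψ ∈ orbitCl S φ ↔ ψ ∈ closure (orbitSet S φ) := Iff.rfl

lemma phi_mem_orbitCl (S : Set (K →L[ℂ] K)) (φ : K) : φ ∈ orbitCl S φ :=
  subset_closure ⟨1, one_mem _, by simp⟩

lemma apply_mem_orbitCl {S : Set (K →L[ℂ] K)} {φ : K} {B : K →L[ℂ] K}
    (hB : B ∈ Algebra.adjoin ℂ S) {ψ : K} (hψ : ψ ∈ orbitCl S φ) :
    B ψ ∈ orbitCl S φ := by
  rw [mem_orbitCl_iff] at hψ ⊢
  refine map_mem_closure B.continuous hψ ?_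
  rintro x ⟨C, hC, rfl⟩
  exact ⟨B * C, mul_mem hB hC, rfl⟩

lemma orbitCl_le {S₁ S₂ : Set (K →L[ℂ] K)} {φ : K}
    (h : ∀ T ∈ S₁, ∀ ψ ∈ orbitCl S₂ φ, T ψ ∈ orbitCl S₂ φ) :
    orbitCl S₁ φ ≤ orbitCl S₂ φ := by
  have key : ∀ B ∈ Algebra.adjoin ℂ S₁, ∀ ψ ∈ orbitCl S₂ φ, B ψ ∈ orbitCl S₂ φ := by
    intro B hB
    induction hB using Algebra.adjoin_induction with
    | mem x hx => exact h x hx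
    | algebraMap r =>
        intro ψ hψ
        have : (algebraMap ℂ (K →L[ℂ] K) r) ψ = r • ψ := by
          simp [Algebra.algebraMap_eq_smul_one]
        rw [this]
        exact Submodule.smul_mem _ r hψ
    | add x y _ _ hx hy =>
        intro ψ hψ
        simpa using add_mem (hx ψ hψ) (hy ψ hψ)
    | mul x y _ _ hx hy =>
        intro ψ hψ
        simpa [ContinuousLinearMap.mul_apply] using hx _ (hy ψ hψ)
  have horb : orbitSet S₁ φ ⊆ (orbitCl S₂ φ : Set K) := by
    rintro x ⟨B, hB, rfl⟩
    exact key B hB φ (phi_mem_orbitCl S₂ φ)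
  intro x hx
  rw [mem_orbitCl_iff] at hx
  have hclosed : IsClosed ((orbitCl S₂ φ : Set K)) :=
    (orbitSub S₂ φ).isClosed_topologicalClosure
  exact closure_minimal horb hclosed hx

end OrbitAux

section GenAux

variable {K : Type*} [NormedAddCommGroup K] [InnerProductSpace ℂ K] [CompleteSpace K]
variable {I : Type} [Countable I]

/-- powers of `G` applied inside the closure of the `genSet` orbit. -/
lemma exp_apply_mem_orbitCl (G : K →L[ℂ] K) (L : I → K →L[ℂ] K) (φ : K) (t : ℝ)
    {ψ : K} (hψ : ψ ∈ orbitCl (genSet G L) φ) :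
    NormedSpace.exp (t • G) ψ ∈ orbitCl (genSet G L) φ := by
  set N := orbitCl (genSet G L) φ with hN
  have hG : G ∈ Algebra.adjoin ℂ (genSet G L) :=
    Algebra.subset_adjoin (Or.inl rfl)
  have hsum : HasSum (fun n : ℕ => ((n.factorial : ℂ))⁻¹ • (t • G) ^ n)
      (NormedSpace.exp (t • G)) := NormedSpace.exp_series_hasSum_exp' (t • G)
  have hsum' : HasSum (fun n : ℕ => ((n.factorial : ℂ))⁻¹ • t ^ n • (G ^ n) ψ)
      (NormedSpace.exp (t • G) ψ) := by
    have := hsum.mapL (ContinuousLinearMap.apply ℂ K ψ)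
    simpa [smul_pow] using this
  have hmem : ∀ n : ℕ, ((n.factorial : ℂ))⁻¹ • t ^ n • (G ^ n) ψ ∈ N := fun n =>
    Submodule.smul_mem _ _ (Submodule.smul_of_tower_mem _ _
      (apply_mem_orbitCl (pow_mem hG n) hψ))
  have hclosed : IsClosed ((N : Set K)) := (orbitSub (genSet G L) φ).isClosed_topologicalClosure
  exact hclosed.mem_of_tendsto hsum'
    (Filter.Eventually.of_forall fun s => Submodule.sum_mem _ fun n _ => hmem n)

lemma G_apply_mem_orbitCl (G : K →L[ℂ] K) (L : I → K →L[ℂ] K) (φ : K)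
    {ψ : K} (hψ : ψ ∈ orbitCl (expGenSet G L) φ) :
    G ψ ∈ orbitCl (expGenSet G L) φ := by
  set M := orbitCl (expGenSet G L) φ with hM
  have hclosed : IsClosed ((M : Set K)) :=
    (orbitSub (expGenSet G L) φ).isClosed_topologicalClosure
  set f : ℝ → K := fun t => NormedSpace.exp (t • G) ψ with hf
  have hexp_eq : (NormedSpace.exp : (K →L[ℂ] K) → (K →L[ℂ] K)) = NormedSpace.exp :=
    rfl
  have hderiv : HasDerivAt f (G ψ) 0 := by
    have h1 : HasDerivAt (fun u : ℝ => NormedSpace.exp (u • G))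
        (NormedSpace.exp ((0 : ℝ) • G) * G) 0 := hasDerivAt_exp_smul_const G (0 : ℝ)
    have h1' : HasDerivAt (fun u : ℝ => NormedSpace.exp (u • G)) G 0 := by
      simpa [NormedSpace.exp_zero] using h1
    have h2 := (((ContinuousLinearMap.apply ℂ K ψ).restrictScalars ℝ).hasFDerivAt
      (x := NormedSpace.exp ((0 : ℝ) • G))).comp_hasDerivAt 0 h1'
    simpa [hf, hexp_eq, Function.comp_def] using h2
  have hslope : Filter.Tendsto (slope f 0) (nhdsWithin 0 (Set.Ioi (0:ℝ))) (nhds (G ψ)) := by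
    refine (hasDerivAt_iff_tendsto_slope.mp hderiv).mono_left ?_
    exact nhdsWithin_mono 0 fun x hx => ne_of_gt hx
  have hf0 : f 0 = ψ := by simp [hf, NormedSpace.exp_zero]
  have hmem : ∀ t : ℝ, 0 < t → slope f 0 t ∈ M := by
    intro t ht
    have hft : f t ∈ M := by
      have hexpmem : NormedSpace.exp (t • G) ∈ Algebra.adjoin ℂ (expGenSet G L) :=
        Algebra.subset_adjoin (Or.inl ⟨t, ht, rfl⟩)
      exact apply_mem_orbitCl hexpmem hψ
    have hsl : slope f 0 t = (t : ℝ)⁻¹ • (f t - f 0) := by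
      rw [slope_def_module]; rw [sub_zero]
    rw [hsl, hf0]
    exact Submodule.smul_of_tower_mem _ _ (Submodule.sub_mem _ hft hψ)
  exact hclosed.mem_of_tendsto hslope
    (eventually_nhdsWithin_of_forall fun t ht => hmem t ht)

end GenAux

/-- For bounded `G` and `(Lᵢ)` with `∑ᵢ Lᵢ*Lᵢ` strongly convergent, and any `φ ≠ 0`, the
set `ℂ[𝓛]φ` (polynomials in `e^{tG}`, `t > 0`, and the `Lᵢ`, applied to `φ`) is dense iff the
set `ℂ[G,L]φ` (polynomials in `G` and the `Lᵢ`, applied to `φ`) is dense. -/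
theorem denseOrbit_exp_iff_denseOrbit_gen
    {K : Type*} [NormedAddCommGroup K] [InnerProductSpace ℂ K] [CompleteSpace K]
    [TopologicalSpace.SeparableSpace K] {I : Type} [Countable I]
    (G : K →L[ℂ] K) (L : I → K →L[ℂ] K) (S : K →L[ℂ] K) (hS : StrongSum L S)
    (φ : K) (hφ : φ ≠ 0) :
    DenseOrbit (expGenSet G L) φ ↔ DenseOrbit (genSet G L) φ := by
  have h1 : ∀ T ∈ genSet G L, ∀ ψ ∈ orbitCl (expGenSet G L) φ,
      T ψ ∈ orbitCl (expGenSet G L) φ := by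
    rintro T (rfl | ⟨i, rfl⟩) ψ hψ
    · exact G_apply_mem_orbitCl T L φ hψ
    · exact apply_mem_orbitCl (Algebra.subset_adjoin (Or.inr ⟨i, rfl⟩)) hψ
  have h2 : ∀ T ∈ expGenSet G L, ∀ ψ ∈ orbitCl (genSet G L) φ,
      T ψ ∈ orbitCl (genSet G L) φ := by
    rintro T (⟨t, ht, rfl⟩ | ⟨i, rfl⟩) ψ hψ
    · exact exp_apply_mem_orbitCl G L φ t hψ
    · exact apply_mem_orbitCl (Algebra.subset_adjoin (Or.inr ⟨i, rfl⟩)) hψ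
  have heq : orbitCl (expGenSet G L) φ = orbitCl (genSet G L) φ :=
    le_antisymm (orbitCl_le h2) (orbitCl_le h1)
  have hset : closure (orbitSet (expGenSet G L) φ) = closure (orbitSet (genSet G L) φ) :=
    congrArg (fun M : Submodule ℂ K => (M : Set K)) heq
  have hd : ∀ s : Set (K →L[ℂ] K), DenseOrbit s φ ↔ Dense (orbitSet s φ) := fun s => Iff.rfl
  rw [hd, hd, dense_iff_closure_eq, dense_iff_closure_eq, hset]
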